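/- Let η = [η₁,...,η_l] be a finite sequence over {0,1} written (after a cyclic shift) as (n₁-1) zeros, a one, (n₂-1) zeros, a one, ..., (n_k-1) zeros, a one, with each n_i ≥ 1. Then with L = [[1,1],[0,1]] and R = [[1,0],[1,1]], trace(L(LR)^{η₁}R ⋯ L(LR)^{η_l}R) = trace(L(LR)^{n₁}R ⋯ L(LR)^{n_k}R). -/
import Mathlib


open Matrix

def Lz : Matrix (Fin 2) (Fin 2) ℤ := !![1,1;0,1]
def Rz : Matrix (Fin 2) (Fin 2) ℤ := !![1,0;1,1]

/-- The word `L (LR)^m R` as a matrix. -/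
def Wz (m : ℕ) : Matrix (Fin 2) (Fin 2) ℤ := Lz * (Lz * Rz) ^ m * Rz

def Qm : Matrix (Fin 2) (Fin 2) ℤ := !![2,1;1,0]
def Qi : Matrix (Fin 2) (Fin 2) ℤ := !![0,1;1,-2]
def Am : Matrix (Fin 2) (Fin 2) ℤ := !![3,-1;1,0]

lemma hQiQ : Qi * Qm = 1 := by
  simp [Qi, Qm, Matrix.mul_fin_two, Matrix.one_fin_two]

lemma hQQi : Qm * Qi = 1 := by
  simp [Qi, Qm, Matrix.mul_fin_two, Matrix.one_fin_two]

lemma hQLR : Qm * (Lz * Rz) = Am * Qm := by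
  simp [Qm, Am, Lz, Rz, Matrix.mul_fin_two]

lemma hAL : Am * Lz = Lz * (Lz * Rz) := by
  simp [Am, Lz, Rz, Matrix.mul_fin_two]

lemma hQW1 : Qm * Wz 1 = Wz 1 * Qm := by
  simp [Qm, Wz, Lz, Rz, Matrix.mul_fin_two]

lemma hAW : ∀ m, Am ^ m * Wz 1 = Wz (m + 1) := by
  intro m
  induction m with
  | zero => simp
  | succ m ih =>
      have : Am ^ (m + 1) * Wz 1 = Am * (Am ^ m * Wz 1) := by
        rw [pow_succ']
        rw [mul_assoc]
      rw [this, ih]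
      show Am * (Lz * (Lz * Rz) ^ (m + 1) * Rz) = Lz * (Lz * Rz) ^ (m + 1 + 1) * Rz
      rw [pow_succ' (Lz * Rz) (m + 1)]
      rw [← mul_assoc, ← mul_assoc, ← mul_assoc, hAL]

lemma hQpow : ∀ m, Qm * (Lz * Rz) ^ m = Am ^ m * Qm := by
  intro m
  induction m with
  | zero => simp
  | succ m ih =>
      rw [pow_succ, ← mul_assoc, ih, mul_assoc, hQLR, ← mul_assoc, ← pow_succ]

lemma hW0 : Wz 0 = Lz * Rz := by simp [Wz]

lemma key (m : ℕ) : (Wz 0) ^ m * Wz 1 = Qi * Wz (m + 1) * Qm := by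
  have h : Qm * ((Wz 0) ^ m * Wz 1) = Wz (m + 1) * Qm := by
    rw [hW0, ← mul_assoc, hQpow, mul_assoc, hQW1, ← mul_assoc, hAW]
  calc (Wz 0) ^ m * Wz 1 = (Qi * Qm) * ((Wz 0) ^ m * Wz 1) := by rw [hQiQ, one_mul]
    _ = Qi * (Qm * ((Wz 0) ^ m * Wz 1)) := by rw [mul_assoc]
    _ = Qi * (Wz (m + 1) * Qm) := by rw [h]
    _ = Qi * Wz (m + 1) * Qm := by rw [mul_assoc]

lemma telescope : ∀ ms : List ℕ,
    (ms.map (fun m => Qi * Wz m * Qm)).prod = Qi * (ms.map Wz).prod * Qm := by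
  intro ms
  induction ms with
  | nil => simp [hQiQ]
  | cons a t ih =>
      simp only [List.map_cons, List.prod_cons, ih]
      calc (Qi * Wz a * Qm) * (Qi * (t.map Wz).prod * Qm)
          = Qi * Wz a * (Qm * Qi) * (t.map Wz).prod * Qm := by
            simp only [mul_assoc]
        _ = Qi * (Wz a * (t.map Wz).prod) * Qm := by
            rw [hQQi]; simp only [mul_one, mul_assoc]

theorem stmt_9 (k : ℕ) (n : Fin k → ℕ) (hn : ∀ i, 1 ≤ n i)
    (η : List ℕ)
    (hη : η = (List.ofFn (fun i => List.replicate (n i - 1) 0 ++ [1])).flatten) :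
    Matrix.trace (η.map Wz).prod =
      Matrix.trace (List.ofFn (fun i => Wz (n i))).prod := by
  subst hη
  have h1 : ((List.ofFn (fun i => List.replicate (n i - 1) 0 ++ [1])).flatten.map Wz).prod
      = (List.ofFn (fun i => Qi * Wz (n i) * Qm)).prod := by
    rw [List.map_flatten, List.map_ofFn, List.prod_flatten, List.map_ofFn]
    have heq : (List.prod ∘ List.map Wz ∘ fun i => List.replicate (n i - 1) 0 ++ [1])
        = fun i => Qi * Wz (n i) * Qm := by
      funext i
      show ((List.replicate (n i - 1) (0:ℕ) ++ [1]).map Wz).prod = Qi * Wz (n i) * Qm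
      rw [List.map_append, List.prod_append, List.map_replicate, List.prod_replicate]
      simp only [List.map_cons, List.map_nil, List.prod_cons, List.prod_nil, mul_one]
      rw [key, Nat.sub_add_cancel (hn i)]
    rw [heq]
  have h2 : (List.ofFn (fun i => Qi * Wz (n i) * Qm)).prod
      = Qi * (List.ofFn (fun i => Wz (n i))).prod * Qm := by
    have := telescope (List.ofFn n)
    rw [List.map_ofFn, List.map_ofFn] at this
    exact this
  rw [h1, h2, Matrix.trace_mul_cycle, hQQi, one_mul]
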